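/- For every k ∈ {1,…,n} one has D(λ_k) = φ_k · A′(λ_k); equivalently, since A′(λ_k) ≠ 0, φ_k = D(λ_k)/A′(λ_k). (This is the spin case of the theorem that the conjugate variables φ_k are given by the rational function r(z) = D(z)/A′(z) evaluated at the eigenvalues λ_k.) -/

import Mathlib

open Matrix BigOperators

noncomputable section

/-- The block matrix `L̃` with diagonal blocks `Λ = diag(λ₁,…,λₙ)` at positions `(h, h+1)`:
its entry in row `(h,j)` and column `(i,k)` is `λⱼ` if `k = j` and `i = h + 1` in `ℤ/mℤ`,
and `0` otherwise. -/
def Ltilde (m n : ℕ) (lam : Fin n → ℂ) :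
    Matrix (ZMod m × Fin n) (ZMod m × Fin n) ℂ :=
  Matrix.of fun p q => if q.2 = p.2 ∧ q.1 = p.1 + 1 then lam p.2 else 0

/-- `|g| = g₀ + g₁ + ⋯ + g_{m-1}`. -/
def gAbs (m : ℕ) (g : ZMod m → ℂ) : ℂ :=
  ∑ s ∈ Finset.range m, g (s : ZMod m)

/-- `cᵢ = Σ_{r=0}^{i} g_r − Σ_{s=0}^{m−1} ((m−s)/m)·g_s`, the index `i` read modulo `m`. -/
def cConst (m : ℕ) (g : ZMod m → ℂ) (i : ZMod m) : ℂ :=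
  (∑ r ∈ Finset.range (i.val + 1), g (r : ZMod m)) -
    ∑ s ∈ Finset.range m, (((m : ℂ) - (s : ℂ)) / (m : ℂ)) * g (s : ZMod m)

/-- The spin matrix `Q̃` built from `V i = ṽᵢ·w̃ᵢ`: its entry in row `(h,j)` and column `(i,k)`
vanishes unless `h = i + 1` in `ℤ/mℤ`, in which case (taking the representative
`i ∈ {0,…,m−1}`) it equals
`φⱼ + (1/λⱼ)·(cᵢ + Σ_{r=0}^{i}(V_r)ⱼⱼ − Σ_{s=0}^{m−1}((m−s)/m)·(V_s)ⱼⱼ)` if `k = j`, and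
`−Σ_{h′=0}^{m−1}(V_{i−h′})ⱼₖ·λⱼ^{m−h′−1}·λₖ^{h′}/(λⱼ^m − λₖ^m)` if `k ≠ j`. -/
def QtildeS (m n : ℕ) (g : ZMod m → ℂ) (lam phi : Fin n → ℂ)
    (V : ZMod m → Matrix (Fin n) (Fin n) ℂ) :
    Matrix (ZMod m × Fin n) (ZMod m × Fin n) ℂ :=
  Matrix.of fun p q =>
    if p.1 = q.1 + 1 then
      if q.2 = p.2 then
        phi p.2 + (1 / lam p.2) *
          (cConst m g q.1 + (∑ r ∈ Finset.range (q.1.val + 1), (V (r : ZMod m)) p.2 p.2) -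
            ∑ s ∈ Finset.range m, (((m : ℂ) - (s : ℂ)) / (m : ℂ)) * (V (s : ZMod m)) p.2 p.2)
      else
        -∑ h' ∈ Finset.range m,
          (V (q.1 - (h' : ZMod m))) p.2 q.2 * lam p.2 ^ (m - h' - 1) * lam q.2 ^ h' /
            (lam p.2 ^ m - lam q.2 ^ m)
    else 0

/-- `A(z) = det(z·1 − L̃)`. -/
def Afun (m n : ℕ) [NeZero m] (lam : Fin n → ℂ) (z : ℂ) : ℂ :=
  (z • (1 : Matrix (ZMod m × Fin n) (ZMod m × Fin n) ℂ) - Ltilde m n lam).det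

/-- `D(z) = tr(Q̃ · adj(z·1 − L̃))` (spin case). -/
def DfunS (m n : ℕ) [NeZero m] (g : ZMod m → ℂ) (lam phi : Fin n → ℂ)
    (V : ZMod m → Matrix (Fin n) (Fin n) ℂ) (z : ℂ) : ℂ :=
  Matrix.trace (QtildeS m n g lam phi V *
    (z • (1 : Matrix (ZMod m × Fin n) (ZMod m × Fin n) ℂ) - Ltilde m n lam).adjugate)

/-- The block-diagonal matrix `B` with entry `(V_h)ⱼₖ` in row `(h,j)` and column `(h,k)`,
and `0` in positions with differing first indices. -/
def Bmat (m n : ℕ) (V : ZMod m → Matrix (Fin n) (Fin n) ℂ) :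
    Matrix (ZMod m × Fin n) (ZMod m × Fin n) ℂ :=
  Matrix.of fun p q => if p.1 = q.1 then (V p.1) p.2 q.2 else 0

/-- `C(z) = tr(Q̃ · adj(z·1 − L̃) · B)` (spin case). -/
def CfunS (m n : ℕ) [NeZero m] (g : ZMod m → ℂ) (lam phi : Fin n → ℂ)
    (V : ZMod m → Matrix (Fin n) (Fin n) ℂ) (z : ℂ) : ℂ :=
  Matrix.trace (QtildeS m n g lam phi V *
    (z • (1 : Matrix (ZMod m × Fin n) (ZMod m × Fin n) ℂ) - Ltilde m n lam).adjugate *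
    Bmat m n V)

open Finset

def finBlk (m : ℕ) (z w : ℂ) : Matrix (Fin m) (Fin m) ℂ :=
  Matrix.of fun r c => (if c = r then z else 0) - (if (c : ℕ) = ((r : ℕ) + 1) % m then w else 0)

lemma hA0 (z w : ℂ) (M : ℕ) : ∀ i : Fin (M + 2), (finBlk (M+2) z w) i 0 =
    if i = 0 then z else if i = Fin.last (M+1) then -w else 0 := by
  intro i
  have hi := i.isLt
  simp only [finBlk, Matrix.of_apply, Fin.ext_iff, Fin.val_zero, Fin.val_last]
  rcases eq_or_ne (i : ℕ) (M + 1) with hl | hl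
  · have h2 : ((i : ℕ) + 1) % (M + 2) = 0 := by rw [hl]; exact Nat.mod_self _
    rw [h2]
    simp [hl]
  · have h2 : ((i : ℕ) + 1) % (M + 2) = (i : ℕ) + 1 := Nat.mod_eq_of_lt (by omega)
    rw [h2]
    rcases eq_or_ne (i : ℕ) 0 with h0 | h0 <;> simp [h0, hl, eq_comm (a := (0:ℕ))] <;> omega

lemma minor0_det (z w : ℂ) (M : ℕ) :
    ((finBlk (M+2) z w).submatrix (Fin.succAbove 0) Fin.succ).det = z ^ (M+1) := by
  have htri : ((finBlk (M+2) z w).submatrix (Fin.succAbove 0) Fin.succ).BlockTriangular id := by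
    intro r c h
    simp only [id] at h
    have hc := c.isLt; have hr := r.isLt
    have hcr : (c : ℕ) < (r : ℕ) := h
    simp only [Matrix.submatrix_apply, Fin.zero_succAbove, finBlk, Matrix.of_apply,
      Fin.ext_iff, Fin.val_succ]
    rcases eq_or_ne (r : ℕ) M with hrM | hrM
    · have : ((r : ℕ) + 1 + 1) % (M + 2) = 0 := by rw [hrM]; exact Nat.mod_self _
      simp only [this]; split_ifs <;> first | ring1 | tauto | (exfalso; omega)
    · have : ((r : ℕ) + 1 + 1) % (M + 2) = (r : ℕ) + 2 := Nat.mod_eq_of_lt (by omega)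
      simp only [this]; split_ifs <;> first | ring1 | tauto | (exfalso; omega)
  rw [Matrix.det_of_upperTriangular htri]
  have hdiag : ∀ r : Fin (M+1),
      ((finBlk (M+2) z w).submatrix (Fin.succAbove 0) Fin.succ) r r = z := by
    intro r
    have hr := r.isLt
    simp only [Matrix.submatrix_apply, Fin.zero_succAbove, finBlk, Matrix.of_apply,
      Fin.ext_iff, Fin.val_succ]
    rcases eq_or_ne (r : ℕ) M with hrM | hrM
    · have : ((r : ℕ) + 1 + 1) % (M + 2) = 0 := by rw [hrM]; exact Nat.mod_self _
      simp only [this]; split_ifs <;> first | ring1 | tauto | (exfalso; omega)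
    · have : ((r : ℕ) + 1 + 1) % (M + 2) = (r : ℕ) + 2 := Nat.mod_eq_of_lt (by omega)
      simp only [this]; split_ifs <;> first | ring1 | tauto | (exfalso; omega)
  rw [Finset.prod_congr rfl fun r _ => hdiag r, Finset.prod_const]
  simp

lemma minor1_det (z w : ℂ) (M : ℕ) :
    ((finBlk (M+2) z w).submatrix (Fin.succAbove (Fin.last (M+1))) Fin.succ).det = (-w) ^ (M+1) := by
  have htri : ((finBlk (M+2) z w).submatrix (Fin.succAbove (Fin.last (M+1))) Fin.succ).BlockTriangular
      OrderDual.toDual := by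
    intro r c h
    have hcr : (r : ℕ) < (c : ℕ) := h
    have hc := c.isLt; have hr := r.isLt
    simp only [Matrix.submatrix_apply, Fin.succAbove_last, finBlk, Matrix.of_apply,
      Fin.ext_iff, Fin.val_succ, Fin.coe_castSucc]
    have : ((r : ℕ) + 1) % (M + 2) = (r : ℕ) + 1 := Nat.mod_eq_of_lt (by omega)
    simp only [this]; split_ifs <;> first | ring1 | tauto | (exfalso; omega)
  rw [Matrix.det_of_lowerTriangular _ htri]
  have hdiag : ∀ r : Fin (M+1),
      ((finBlk (M+2) z w).submatrix (Fin.succAbove (Fin.last (M+1))) Fin.succ) r r = -w := by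
    intro r
    have hr := r.isLt
    simp only [Matrix.submatrix_apply, Fin.succAbove_last, finBlk, Matrix.of_apply,
      Fin.ext_iff, Fin.val_succ, Fin.coe_castSucc]
    have : ((r : ℕ) + 1) % (M + 2) = (r : ℕ) + 1 := Nat.mod_eq_of_lt (by omega)
    simp only [this]; split_ifs <;> first | ring1 | tauto | (exfalso; omega)
  rw [Finset.prod_congr rfl fun r _ => hdiag r, Finset.prod_const]
  simp

lemma det_finBlk (z w : ℂ) : ∀ m : ℕ, 0 < m → (finBlk m z w).det = z ^ m - w ^ m := by
  intro m hm
  match m, hm with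
  | 1, _ =>
    rw [show (finBlk 1 z w) = !![z - w] by ext r c; fin_cases r; fin_cases c; simp [finBlk]]
    simp [Matrix.det_fin_one]
  | (M + 2), _ =>
    rw [Matrix.det_succ_column_zero]
    have hne : (0 : Fin (M+2)) ≠ Fin.last (M+1) := by
      rw [Ne, Fin.ext_iff, Fin.val_zero, Fin.val_last]; omega
    have hsub : (Finset.univ : Finset (Fin (M+2))).sum
        (fun i => (-1 : ℂ) ^ (i : ℕ) * (finBlk (M+2) z w) i 0 *
          ((finBlk (M+2) z w).submatrix i.succAbove Fin.succ).det) =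
        ({0, Fin.last (M+1)} : Finset (Fin (M+2))).sum
        (fun i => (-1 : ℂ) ^ (i : ℕ) * (finBlk (M+2) z w) i 0 *
          ((finBlk (M+2) z w).submatrix i.succAbove Fin.succ).det) := by
      refine (Finset.sum_subset (Finset.subset_univ _) ?_).symm
      intro i _ hi
      simp only [Finset.mem_insert, Finset.mem_singleton, not_or] at hi
      rw [hA0, if_neg hi.1, if_neg hi.2]
      ring
    rw [hsub, Finset.sum_pair hne]
    have h00 : (finBlk (M+2) z w) 0 0 = z := by rw [hA0]; simp
    have h10 : (finBlk (M+2) z w) (Fin.last (M+1)) 0 = -w := by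
      rw [hA0, if_neg (Ne.symm hne), if_pos rfl]
    rw [h00, h10, minor0_det, minor1_det]
    have hlv : ((Fin.last (M+1) : Fin (M+2)) : ℕ) = M + 1 := rfl
    rw [hlv, Fin.val_zero, pow_zero]
    have h1 : (-1 : ℂ) ^ (M + 1) * -w * (-w) ^ (M + 1) = -(w ^ (M + 2)) := by
      rw [neg_pow w (M+1)]
      have h2 : (-1 : ℂ) ^ (M + 1) * (-1 : ℂ) ^ (M + 1) = 1 := by
        rw [← pow_add, ← two_mul, pow_mul]; norm_num
      calc (-1 : ℂ) ^ (M+1) * -w * ((-1:ℂ)^(M+1) * w ^ (M+1))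
          = ((-1:ℂ)^(M+1) * (-1:ℂ)^(M+1)) * (-w * w^(M+1)) := by ring
        _ = -(w ^ (M+2)) := by rw [h2]; ring
    rw [h1]; ring

def zmodEquiv (m : ℕ) [NeZero m] : Fin m ≃ ZMod m where
  toFun i := ((i : ℕ) : ZMod m)
  invFun a := ⟨a.val, a.val_lt⟩
  left_inv i := by ext; simp [ZMod.val_cast_of_lt i.isLt]
  right_inv a := ZMod.natCast_rightInverse a

lemma sum_range_zmod {m : ℕ} [NeZero m] (f : ZMod m → ℂ) :
    ∑ t ∈ Finset.range m, f ((t : ℕ) : ZMod m) = ∑ a : ZMod m, f a := by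
  rw [← Fin.sum_univ_eq_sum_range (fun t : ℕ => f ((t : ℕ) : ZMod m)) m]
  exact Fintype.sum_equiv (zmodEquiv m) _ _ (fun i => rfl)

lemma zmod_eq_add_one_iff {m : ℕ} [NeZero m] (a b : ZMod m) :
    b = a + 1 ↔ b.val = (a.val + 1) % m := by
  have h : (a + 1).val = (a.val + 1) % m := by
    rw [ZMod.val_add, ZMod.val_one_eq_one_mod]
    conv_rhs => rw [Nat.add_mod, Nat.mod_eq_of_lt a.val_lt]
  rw [← h, ← (ZMod.val_injective m).eq_iff]

def Mblk (m : ℕ) (z w : ℂ) : Matrix (ZMod m) (ZMod m) ℂ :=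
  Matrix.of fun h i => (if i = h then z else 0) - (if i = h + 1 then w else 0)

lemma det_Mblk {m : ℕ} [NeZero m] (z w : ℂ) : (Mblk m z w).det = z ^ m - w ^ m := by
  have : Mblk m z w = (finBlk m z w).submatrix ((zmodEquiv m).symm) ((zmodEquiv m).symm) := by
    ext h i
    simp only [Mblk, finBlk, Matrix.of_apply, Matrix.submatrix_apply]
    have h1 : ((zmodEquiv m).symm i : ℕ) = i.val := rfl
    have h2 : ((zmodEquiv m).symm h : ℕ) = h.val := rfl
    rw [h1, h2]
    congr 1
    · congr 1
      simp only [eq_iff_iff]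
      rw [← (ZMod.val_injective m).eq_iff, Fin.ext_iff, h1, h2]
    · congr 1
      simp only [eq_iff_iff]
      rw [zmod_eq_add_one_iff]
  rw [this, Matrix.det_submatrix_equiv_self, det_finBlk z w m (Nat.pos_of_ne_zero (NeZero.ne m))]
lemma sub_eq_blockDiag (m n : ℕ) (lam : Fin n → ℂ) (z : ℂ) :
    z • (1 : Matrix (ZMod m × Fin n) (ZMod m × Fin n) ℂ) - Ltilde m n lam =
      Matrix.blockDiagonal (fun j => Mblk m z (lam j)) := by
  ext p q
  rcases p with ⟨h, j⟩; rcases q with ⟨i, k⟩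
  simp only [Matrix.sub_apply, Matrix.smul_apply, Matrix.one_apply, Ltilde, Matrix.of_apply,
    Matrix.blockDiagonal_apply, Mblk, Prod.mk.injEq, smul_eq_mul]
  rcases eq_or_ne j k with rfl | hjk
  · simp only [if_pos rfl, and_true]
    rcases eq_or_ne i h with rfl | hih
    · simp [Prod.ext_iff]
    · simp [Prod.ext_iff, hih, Ne.symm hih]
  · simp [hjk, Ne.symm hjk, Prod.ext_iff, mul_ite]

lemma Afun_eq (m n : ℕ) [NeZero m] (lam : Fin n → ℂ) (z : ℂ) :
    Afun m n lam z = ∏ j : Fin n, (z ^ m - lam j ^ m) := by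
  rw [Afun, sub_eq_blockDiag, Matrix.det_blockDiagonal]
  exact Finset.prod_congr rfl fun j _ => det_Mblk z (lam j)

def AdjM (m n : ℕ) (lam : Fin n → ℂ) (z : ℂ) :
    Matrix (ZMod m × Fin n) (ZMod m × Fin n) ℂ :=
  Matrix.of fun p q =>
    if q.2 = p.2 then
      (∏ j ∈ Finset.univ.erase p.2, (z ^ m - lam j ^ m)) *
        ∑ t ∈ Finset.range m, (if q.1 = p.1 + ((t : ℕ) : ZMod m)
          then z ^ (m - 1 - t) * lam p.2 ^ t else 0)
    else 0

lemma telescope (m : ℕ) [NeZero m] (z w : ℂ) (h i : ZMod m) :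
    z * (∑ t ∈ Finset.range m, if i = h + ((t : ℕ) : ZMod m) then z ^ (m-1-t) * w ^ t else 0)
    - w * (∑ t ∈ Finset.range m, if i = (h+1) + ((t : ℕ) : ZMod m) then z ^ (m-1-t) * w ^ t else 0)
    = if i = h then z ^ m - w ^ m else 0 := by
  set f : ℕ → ℂ := fun t => if i = h + ((t : ℕ) : ZMod m) then z ^ (m-t) * w ^ t else 0 with hf
  have h1 : z * (∑ t ∈ Finset.range m, if i = h + ((t : ℕ) : ZMod m)
      then z ^ (m-1-t) * w ^ t else 0) = ∑ t ∈ Finset.range m, f t := by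
    rw [Finset.mul_sum]
    refine Finset.sum_congr rfl fun t ht => ?_
    rw [Finset.mem_range] at ht
    simp only [mul_ite, mul_zero, hf]
    rcases eq_or_ne i (h + ((t : ℕ) : ZMod m)) with hc | hc
    · rw [if_pos hc, if_pos hc, ← mul_assoc, ← pow_succ']
      congr 2
      omega
    · rw [if_neg hc, if_neg hc]
  have h2 : w * (∑ t ∈ Finset.range m, if i = (h+1) + ((t : ℕ) : ZMod m)
      then z ^ (m-1-t) * w ^ t else 0) = ∑ t ∈ Finset.range m, f (t + 1) := by
    rw [Finset.mul_sum]
    refine Finset.sum_congr rfl fun t ht => ?_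
    simp only [mul_ite, mul_zero, hf]
    have hceq : (h + 1) + ((t : ℕ) : ZMod m) = h + (((t+1 : ℕ)) : ZMod m) := by
      push_cast; ring
    rcases eq_or_ne i ((h+1) + ((t : ℕ) : ZMod m)) with hc | hc
    · rw [if_pos hc, if_pos (hceq ▸ hc)]
      have he : m - 1 - t = m - (t + 1) := by omega
      rw [he, pow_succ]
      ring
    · rw [if_neg hc, if_neg (fun hcc => hc (hceq ▸ hcc))]
  rw [h1, h2, ← Finset.sum_sub_distrib, Finset.sum_range_sub' f m]
  have hf0 : f 0 = if i = h then z ^ m else 0 := by simp [hf]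
  have hfm : f m = if i = h then w ^ m else 0 := by simp [hf, ZMod.natCast_self]
  rw [hf0, hfm]
  rcases eq_or_ne i h with rfl | hih
  · simp
  · simp [hih]

lemma mul_AdjM (m n : ℕ) [NeZero m] (lam : Fin n → ℂ) (z : ℂ) :
    (z • (1 : Matrix (ZMod m × Fin n) (ZMod m × Fin n) ℂ) - Ltilde m n lam) * AdjM m n lam z =
      (∏ j : Fin n, (z ^ m - lam j ^ m)) • 1 := by
  have hL : ∀ p q, (Ltilde m n lam * AdjM m n lam z) p q
      = lam p.2 * AdjM m n lam z (p.1 + 1, p.2) q := by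
    intro p q
    rw [Matrix.mul_apply]
    rw [Finset.sum_eq_single (p.1 + 1, p.2)]
    · simp [Ltilde]
    · intro b _ hb
      have : ¬(b.2 = p.2 ∧ b.1 = p.1 + 1) := by
        rintro ⟨h1, h2⟩; exact hb (Prod.ext h2 h1)
      simp [Ltilde, this]
    · intro hmem; exact absurd (Finset.mem_univ _) hmem
  ext p q
  rw [Matrix.sub_mul, Matrix.smul_mul, Matrix.one_mul, Matrix.sub_apply, Matrix.smul_apply,
    hL, Matrix.smul_apply, Matrix.one_apply, smul_eq_mul, smul_eq_mul]
  rcases p with ⟨h, j⟩; rcases q with ⟨i, k⟩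
  by_cases hkj : k = j
  swap
  · simp only [AdjM, Matrix.of_apply]
    rw [if_neg hkj, if_neg hkj, if_neg (by simp [Prod.ext_iff]; exact fun _ hh => hkj hh.symm)]
    ring
  · subst hkj
    simp only [AdjM, Matrix.of_apply, eq_self_iff_true, if_true]
    rw [mul_left_comm z, mul_left_comm (lam k), ← mul_sub, telescope m z (lam k) h i]
    have hp : ((h, k) = (i, k)) = (i = h) := by
      simp [Prod.ext_iff, eq_comm]
    simp only [hp]
    rcases eq_or_ne i h with rfl | hih
    · rw [if_pos rfl, if_pos rfl, mul_comm, Finset.mul_prod_erase Finset.univ (fun j => z ^ m - lam j ^ m) (Finset.mem_univ k),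
        mul_one]
    · rw [if_neg hih, if_neg hih, mul_zero, mul_zero]

lemma adjugate_eq_AdjM (m n : ℕ) [NeZero m] (lam : Fin n → ℂ) :
    ∀ z : ℂ, (z • (1 : Matrix (ZMod m × Fin n) (ZMod m × Fin n) ℂ) - Ltilde m n lam).adjugate
      = AdjM m n lam z := by
  have hstep : ∀ z : ℂ, (∏ j : Fin n, (z ^ m - lam j ^ m)) ≠ 0 →
      (z • (1 : Matrix (ZMod m × Fin n) (ZMod m × Fin n) ℂ) - Ltilde m n lam).adjugate
        = AdjM m n lam z := by
    intro z hz
    have h1 := mul_AdjM m n lam z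
    have hdetM : (z • (1 : Matrix (ZMod m × Fin n) (ZMod m × Fin n) ℂ)
        - Ltilde m n lam).det = ∏ j : Fin n, (z ^ m - lam j ^ m) := Afun_eq m n lam z
    have h2 : (z • (1 : Matrix (ZMod m × Fin n) (ZMod m × Fin n) ℂ) - Ltilde m n lam) *
        (z • (1 : Matrix (ZMod m × Fin n) (ZMod m × Fin n) ℂ) - Ltilde m n lam).adjugate
        = (∏ j : Fin n, (z ^ m - lam j ^ m)) • 1 := by
      rw [Matrix.mul_adjugate, hdetM]
    have h3 : (z • (1 : Matrix (ZMod m × Fin n) (ZMod m × Fin n) ℂ) - Ltilde m n lam).adjugate *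
        ((z • (1 : Matrix (ZMod m × Fin n) (ZMod m × Fin n) ℂ) - Ltilde m n lam) *
          ((z • (1 : Matrix (ZMod m × Fin n) (ZMod m × Fin n) ℂ) - Ltilde m n lam).adjugate
            - AdjM m n lam z)) = 0 := by
      rw [Matrix.mul_sub, h1, h2, sub_self, Matrix.mul_zero]
    rw [← Matrix.mul_assoc, Matrix.adjugate_mul, hdetM, Matrix.smul_mul, Matrix.one_mul] at h3
    have hx := (smul_eq_zero.mp h3).resolve_left hz
    exact sub_eq_zero.mp hx
  have hfin : ({z : ℂ | (∏ j : Fin n, (z ^ m - lam j ^ m)) = 0}).Finite := by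
    have hset : {z : ℂ | (∏ j : Fin n, (z ^ m - lam j ^ m)) = 0} =
        {z | Polynomial.IsRoot
          (∏ j : Fin n, (Polynomial.X ^ m - Polynomial.C (lam j ^ m))) z} := by
      ext z
      simp [Polynomial.IsRoot, Polynomial.eval_prod]
    rw [hset]
    apply Polynomial.finite_setOf_isRoot
    apply Finset.prod_ne_zero_iff.mpr
    intro j _
    exact Polynomial.X_pow_sub_C_ne_zero (Nat.pos_of_ne_zero (NeZero.ne m)) _
  have hdense : Dense {z : ℂ | (∏ j : Fin n, (z ^ m - lam j ^ m)) = 0}ᶜ :=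
    hfin.countable.dense_compl ℂ
  have hcont1 : Continuous fun z : ℂ =>
      (z • (1 : Matrix (ZMod m × Fin n) (ZMod m × Fin n) ℂ) - Ltilde m n lam).adjugate :=
    Continuous.matrix_adjugate ((continuous_id.smul continuous_const).sub continuous_const)
  have hcont2 : Continuous fun z : ℂ => AdjM m n lam z := by
    apply continuous_matrix
    intro p q
    simp only [AdjM, Matrix.of_apply]
    split_ifs
    · apply Continuous.mul
      · apply continuous_finset_prod
        intro j _
        exact (continuous_pow m).sub continuous_const
      · apply continuous_finset_sum
        intro t _
        split_ifs
        · exact (continuous_pow _).mul continuous_const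
        · exact continuous_const
    · exact continuous_const
  have heq := Continuous.ext_on hdense hcont1 hcont2 (fun z hz => hstep z hz)
  exact fun z => congrFun heq z

lemma AdjM_at (m n : ℕ) [NeZero m] (lam : Fin n → ℂ) (k : Fin n) :
    AdjM m n lam (lam k) = Matrix.of fun p q =>
      if p.2 = k ∧ q.2 = k then
        (∏ j ∈ Finset.univ.erase k, (lam k ^ m - lam j ^ m)) * lam k ^ (m-1) else 0 := by
  ext p q
  rcases p with ⟨h, j⟩; rcases q with ⟨i, j'⟩
  simp only [AdjM, Matrix.of_apply]
  by_cases h1 : j' = j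
  · subst h1
    by_cases h2 : j' = k
    · rw [h2]
      simp only [if_pos rfl, and_self, if_pos]
      congr 1
      have hstep : ∀ t ∈ Finset.range m,
          (if i = h + ((t : ℕ) : ZMod m) then lam k ^ (m-1-t) * lam k ^ t else 0)
          = (fun a : ZMod m => if i = h + a then lam k ^ (m-1) else 0) ((t : ℕ) : ZMod m) := by
        intro t ht
        rw [Finset.mem_range] at ht
        simp only
        rcases eq_or_ne i (h + ((t : ℕ) : ZMod m)) with hc | hc
        · rw [if_pos hc, if_pos hc, ← pow_add]
          congr 1
          omega
        · rw [if_neg hc, if_neg hc]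
      rw [Finset.sum_congr rfl hstep,
        sum_range_zmod (fun a : ZMod m => if i = h + a then lam k ^ (m-1) else 0)]
      have hc2 : ∀ a : ZMod m, (i = h + a) = (a = i - h) := by
        intro a
        simp only [eq_iff_iff]
        constructor
        · intro hh; rw [hh]; ring
        · intro hh; rw [hh]; ring
      simp only [hc2]
      rw [Finset.sum_ite_eq' Finset.univ (i - h) (fun _ => lam k ^ (m-1))]
      simp
    · rw [if_pos rfl, if_neg (fun hc => h2 hc.1)]
      rw [Finset.prod_eq_zero (i := k)
        (Finset.mem_erase.mpr ⟨fun hc => h2 hc.symm, Finset.mem_univ k⟩) (sub_self (lam k ^ m)), zero_mul]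
  · rw [if_neg h1, if_neg (fun hc => h1 (hc.2.trans hc.1.symm))]

lemma sum_partial (F : ℕ → ℂ) : ∀ m : ℕ,
    ∑ t ∈ Finset.range m, ∑ r ∈ Finset.range (t+1), F r
      = ∑ r ∈ Finset.range m, ((m:ℂ) - r) * F r := by
  intro m
  induction m with
  | zero => simp
  | succ M ih =>
    rw [Finset.sum_range_succ, ih, Finset.sum_range_succ (fun r => (((M+1:ℕ):ℂ) - r) * F r),
      Finset.sum_range_succ F M]
    push_cast
    rw [show ∑ r ∈ Finset.range M, ((M:ℂ) - r) * F r + (∑ r ∈ Finset.range M, F r + F M)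
        = (∑ r ∈ Finset.range M, (((M:ℂ) - r) * F r + F r)) + F M by
      rw [Finset.sum_add_distrib]; ring]
    rw [Finset.sum_congr rfl (fun (r : ℕ) _ => show ((M:ℂ) - r) * F r + F r
      = ((M:ℂ) + 1 - r) * F r by ring)]
    ring

lemma cancel_sum (m : ℕ) [NeZero m] (F : ZMod m → ℂ) :
    ∑ i : ZMod m, ((∑ r ∈ Finset.range (i.val+1), F ((r : ℕ) : ZMod m))
      - ∑ s ∈ Finset.range m, (((m:ℂ) - (s:ℂ))/(m:ℂ)) * F ((s : ℕ) : ZMod m)) = 0 := by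
  have hm : ((m:ℂ)) ≠ 0 := Nat.cast_ne_zero.mpr (NeZero.ne m)
  rw [Finset.sum_sub_distrib, Finset.sum_const, Finset.card_univ, ZMod.card]
  rw [← sum_range_zmod (fun a : ZMod m => ∑ r ∈ Finset.range (a.val+1), F ((r : ℕ) : ZMod m))]
  have hval : ∀ t ∈ Finset.range m,
      (∑ r ∈ Finset.range ((((t:ℕ) : ZMod m)).val + 1), F ((r : ℕ) : ZMod m))
        = ∑ r ∈ Finset.range (t+1), F ((r : ℕ) : ZMod m) := by
    intro t ht
    rw [Finset.mem_range] at ht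
    rw [ZMod.val_cast_of_lt ht]
  rw [Finset.sum_congr rfl hval, sum_partial (fun r => F ((r : ℕ) : ZMod m)) m, nsmul_eq_mul,
    Finset.mul_sum]
  rw [Finset.sum_congr rfl (fun (s : ℕ) _ => show (m:ℂ) * ((((m:ℂ) - (s:ℂ))/(m:ℂ)) *
    F ((s : ℕ) : ZMod m)) = ((m:ℂ) - s) * F ((s : ℕ) : ZMod m) by field_simp)]
  rw [sub_self]

/-- Spin case: for every `k`, `D(λₖ) = φₖ · A′(λₖ)`; equivalently, since
`A′(λₖ) ≠ 0`, `φₖ = D(λₖ)/A′(λₖ)`. -/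
theorem spin_phi_eq_D_div_A' (m n d : ℕ) [NeZero m] (hn : 0 < n) (hd : 0 < d)
    (lam phi : Fin n → ℂ) (g : ZMod m → ℂ)
    (hlam : ∀ j, lam j ≠ 0)
    (hsep : ∀ j k : Fin n, j ≠ k → lam j ^ m ≠ lam k ^ m)
    (vt : ZMod m → Matrix (Fin n) (Fin d) ℂ) (wt : ZMod m → Matrix (Fin d) (Fin n) ℂ)
    (hV : ∀ j : Fin n, ∑ i : ZMod m, (vt i * wt i) j j = gAbs m g) (k : Fin n) :
    deriv (Afun m n lam) (lam k) ≠ 0 ∧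
    DfunS m n g lam phi (fun i => vt i * wt i) (lam k) =
      phi k * deriv (Afun m n lam) (lam k) ∧
    phi k =
      DfunS m n g lam phi (fun i => vt i * wt i) (lam k) / deriv (Afun m n lam) (lam k) := by
  have hm : ((m:ℂ)) ≠ 0 := Nat.cast_ne_zero.mpr (NeZero.ne m)
  set α := ∏ j ∈ Finset.univ.erase k, (lam k ^ m - lam j ^ m) with hα
  have hαne : α ≠ 0 := by
    rw [hα]
    apply Finset.prod_ne_zero_iff.mpr
    intro j hj
    exact sub_ne_zero.mpr (hsep k j (Ne.symm (Finset.mem_erase.mp hj).1))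
  -- derivative
  have hA' : deriv (Afun m n lam) (lam k) = α * ((m:ℂ) * lam k ^ (m-1)) := by
    have hfun : Afun m n lam = fun z => ∏ j : Fin n, (z ^ m - lam j ^ m) :=
      funext (Afun_eq m n lam)
    rw [hfun]
    have hd : HasDerivAt (fun z : ℂ => ∏ j : Fin n, (z ^ m - lam j ^ m))
        (∑ j : Fin n, (∏ j' ∈ Finset.univ.erase j, (lam k ^ m - lam j' ^ m)) •
          ((m:ℂ) * lam k ^ (m-1))) (lam k) :=
      HasDerivAt.fun_finsetProd (fun j _ => (hasDerivAt_pow m (lam k)).sub_const _)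
    rw [hd.deriv, Finset.sum_eq_single k]
    · rw [smul_eq_mul, hα]
    · intro j _ hj
      rw [Finset.prod_eq_zero (i := k)
        (Finset.mem_erase.mpr ⟨Ne.symm hj, Finset.mem_univ k⟩) (sub_self (lam k ^ m)), zero_smul]
    · intro hmem; exact absurd (Finset.mem_univ k) hmem
  have hA'ne : deriv (Afun m n lam) (lam k) ≠ 0 := by
    rw [hA']
    exact mul_ne_zero hαne (mul_ne_zero hm (pow_ne_zero _ (hlam k)))
  -- the D value
  have hD : DfunS m n g lam phi (fun i => vt i * wt i) (lam k) =
      (α * lam k ^ (m-1)) * ((m:ℂ) * phi k) := by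
    rw [DfunS, adjugate_eq_AdjM m n lam (lam k), AdjM_at m n lam k, ← hα]
    have key : ∀ (A : Matrix (ZMod m × Fin n) (ZMod m × Fin n) ℂ) (c : ℂ),
        Matrix.trace (A * (Matrix.of fun p q : ZMod m × Fin n =>
          if p.2 = k ∧ q.2 = k then c else 0))
        = ∑ h : ZMod m, ∑ i : ZMod m, A (h, k) (i, k) * c := by
      intro A c
      rw [Matrix.trace]
      simp only [Matrix.diag_apply, Matrix.mul_apply, Matrix.of_apply, mul_ite, mul_zero]
      rw [Fintype.sum_prod_type]
      simp only [Fintype.sum_prod_type, ite_and]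
      simp only [Finset.sum_ite_eq', Finset.mem_univ, if_true]
      refine Finset.sum_congr rfl fun h _ => ?_
      rw [Finset.sum_congr rfl (fun (j : Fin n) _ =>
        show (∑ i : ZMod m, if j = k then A (h, j) (i, k) * c else 0)
          = if j = k then ∑ i : ZMod m, A (h, j) (i, k) * c else 0 by
        split_ifs <;> simp)]
      rw [Finset.sum_ite_eq' Finset.univ k (fun j => ∑ i : ZMod m, A (h, j) (i, k) * c)]
      simp
    rw [key]
    have hQ : ∀ h i : ZMod m,
        QtildeS m n g lam phi (fun i => vt i * wt i) (h, k) (i, k)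
        = if h = i + 1 then
            phi k + (1 / lam k) *
              (cConst m g i + (∑ r ∈ Finset.range (i.val + 1), ((vt ((r:ℕ) : ZMod m) *
                wt ((r:ℕ) : ZMod m))) k k) -
                ∑ s ∈ Finset.range m, (((m : ℂ) - (s : ℂ)) / (m : ℂ)) *
                  ((vt ((s:ℕ) : ZMod m) * wt ((s:ℕ) : ZMod m))) k k)
          else 0 := by
      intro h i
      simp only [QtildeS, Matrix.of_apply, eq_self_iff_true, if_true]
    simp only [hQ]
    rw [Finset.sum_comm]
    rw [Finset.sum_congr rfl (fun (i : ZMod m) _ => show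
        (∑ h : ZMod m, (if h = i + 1 then
          phi k + (1 / lam k) *
            (cConst m g i + (∑ r ∈ Finset.range (i.val + 1), ((vt ((r:ℕ) : ZMod m) *
              wt ((r:ℕ) : ZMod m))) k k) -
              ∑ s ∈ Finset.range m, (((m : ℂ) - (s : ℂ)) / (m : ℂ)) *
                ((vt ((s:ℕ) : ZMod m) * wt ((s:ℕ) : ZMod m))) k k)
          else 0) * (α * lam k ^ (m-1)))
        = (phi k + (1 / lam k) *
            (cConst m g i + (∑ r ∈ Finset.range (i.val + 1), ((vt ((r:ℕ) : ZMod m) *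
              wt ((r:ℕ) : ZMod m))) k k) -
              ∑ s ∈ Finset.range m, (((m : ℂ) - (s : ℂ)) / (m : ℂ)) *
                ((vt ((s:ℕ) : ZMod m) * wt ((s:ℕ) : ZMod m))) k k)) * (α * lam k ^ (m-1)) by
      simp only [ite_mul, zero_mul]
      rw [Finset.sum_ite_eq' Finset.univ (i + 1)]
      simp)]
    rw [← Finset.sum_mul]
    have hsplit : ∑ i : ZMod m, (phi k + (1 / lam k) *
        (cConst m g i + (∑ r ∈ Finset.range (i.val + 1), ((vt ((r:ℕ) : ZMod m) *
          wt ((r:ℕ) : ZMod m))) k k) -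
          ∑ s ∈ Finset.range m, (((m : ℂ) - (s : ℂ)) / (m : ℂ)) *
            ((vt ((s:ℕ) : ZMod m) * wt ((s:ℕ) : ZMod m))) k k))
        = (m : ℂ) * phi k := by
      rw [Finset.sum_add_distrib, ← Finset.mul_sum]
      have hc : ∑ i : ZMod m, (cConst m g i + (∑ r ∈ Finset.range (i.val + 1),
          ((vt ((r:ℕ) : ZMod m) * wt ((r:ℕ) : ZMod m))) k k) -
          ∑ s ∈ Finset.range m, (((m : ℂ) - (s : ℂ)) / (m : ℂ)) *
            ((vt ((s:ℕ) : ZMod m) * wt ((s:ℕ) : ZMod m))) k k) = 0 := by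
        rw [Finset.sum_congr rfl (fun (i : ZMod m) _ => show
            cConst m g i + (∑ r ∈ Finset.range (i.val + 1),
              ((vt ((r:ℕ) : ZMod m) * wt ((r:ℕ) : ZMod m))) k k) -
              ∑ s ∈ Finset.range m, (((m : ℂ) - (s : ℂ)) / (m : ℂ)) *
                ((vt ((s:ℕ) : ZMod m) * wt ((s:ℕ) : ZMod m))) k k
            = ((∑ r ∈ Finset.range (i.val + 1), g ((r:ℕ) : ZMod m)) -
                ∑ s ∈ Finset.range m, (((m : ℂ) - (s : ℂ)) / (m : ℂ)) * g ((s:ℕ) : ZMod m))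
              + ((∑ r ∈ Finset.range (i.val + 1),
                  (fun a : ZMod m => (vt a * wt a) k k) ((r:ℕ) : ZMod m)) -
                ∑ s ∈ Finset.range m, (((m : ℂ) - (s : ℂ)) / (m : ℂ)) *
                  (fun a : ZMod m => (vt a * wt a) k k) ((s:ℕ) : ZMod m)) by
          rw [cConst]; ring)]
        rw [Finset.sum_add_distrib, cancel_sum m g,
          cancel_sum m (fun a : ZMod m => (vt a * wt a) k k), add_zero]
      rw [hc, mul_zero, add_zero, Finset.sum_const, Finset.card_univ, ZMod.card,
        nsmul_eq_mul]
    rw [hsplit]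
    ring
  refine ⟨hA'ne, ?_, ?_⟩
  · rw [hD, hA']; ring
  · rw [hD, hA', show (α * lam k ^ (m-1)) * ((m:ℂ) * phi k)
      = phi k * (α * ((m:ℂ) * lam k ^ (m-1))) by ring,
      mul_div_cancel_right₀ _ (by rw [hA'] at hA'ne; exact hA'ne)]
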